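/- Let 0 < a < b be real numbers and let p ∈ (−∞,−1) ∪ (−1,0) ∪ [1,∞). Then for every x ∈ (a,b], (b−a)·( (aᵖ+bᵖ)/2 − (b^{p+1}−a^{p+1})/((p+1)(b−a)) ) ≥ (x−a)·( (aᵖ+xᵖ)/2 − (x^{p+1}−a^{p+1})/((p+1)(x−a)) ). Equivalently, (b−a)·( [A_p(a,b)]ᵖ − [L_p(a,b)]ᵖ ) ≥ (x−a)·( [A_p(a,x)]ᵖ − [L_p(a,x)]ᵖ ), where A_p(u,v) = ((uᵖ+vᵖ)/2)^{1/p} is the power mean and L_p(u,v) = ((v^{p+1}−u^{p+1})/((p+1)(v−u)))^{1/p} is the p-logarithmic mean. -/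

import Mathlib

open Real

/-- Bernoulli-type tangent line inequality for `rpow` with exponent `p ≤ 0` or `1 ≤ p`. -/
lemma bern_aux {p t : ℝ} (ht : 0 < t) (hp : p ≤ 0 ∨ 1 ≤ p) :
    1 + p * (t - 1) ≤ t ^ p := by
  rcases hp with hp | hp
  · -- use Bernoulli with exponent 1 - p ≥ 1 at 1/t - 1
    have hu : (-1 : ℝ) ≤ t⁻¹ - 1 := by
      have : 0 < t⁻¹ := inv_pos.mpr ht
      linarith
    have h := one_add_mul_self_le_rpow_one_add hu (p := 1 - p) (by linarith)
    have h2 : (1 : ℝ) + (t⁻¹ - 1) = t⁻¹ := by ring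
    rw [h2] at h
    have h3 : (t⁻¹) ^ (1 - p) = t ^ p / t := by
      rw [Real.inv_rpow ht.le, Real.rpow_sub ht, Real.rpow_one, inv_div]
    rw [h3] at h
    have htp : 0 < t ^ p := Real.rpow_pos_of_pos ht p
    have h4 : t * (1 + (1 - p) * (t⁻¹ - 1)) ≤ t * (t ^ p / t) :=
      mul_le_mul_of_nonneg_left h ht.le
    have h5 : t * (t ^ p / t) = t ^ p := by field_simp
    have h6 : t * (1 + (1 - p) * (t⁻¹ - 1)) = t + (1 - p) * (1 - t) := by
      field_simp
    rw [h5, h6] at h4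
    linarith
  · have hs : (-1 : ℝ) ≤ t - 1 := by linarith
    have h := one_add_mul_self_le_rpow_one_add hs hp
    simpa using h
theorem fejer_stmt_15 (a b p : ℝ) (ha : 0 < a) (hab : a < b)
    (hp : p < -1 ∨ (-1 < p ∧ p < 0) ∨ 1 ≤ p)
    (x : ℝ) (hx : x ∈ Set.Ioc a b) :
    (x - a) * ((a ^ p + x ^ p) / 2
        - (x ^ (p + 1) - a ^ (p + 1)) / ((p + 1) * (x - a)))
      ≤ (b - a) * ((a ^ p + b ^ p) / 2
        - (b ^ (p + 1) - a ^ (p + 1)) / ((p + 1) * (b - a))) := by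
  have hp1 : p + 1 ≠ 0 := by
    rcases hp with h | ⟨h, _⟩ | h <;> intro hc <;> linarith
  have hple : p ≤ 0 ∨ 1 ≤ p := by
    rcases hp with h | ⟨_, h⟩ | h
    · exact Or.inl (by linarith)
    · exact Or.inl h.le
    · exact Or.inr h
  set F : ℝ → ℝ := fun y => (y - a) * (a ^ p + y ^ p) / 2
      - (y ^ (p + 1) - a ^ (p + 1)) / (p + 1) with hF
  -- derivative of F
  have hd : ∀ y ∈ Set.Icc a b, HasDerivAt F
      ((a ^ p + y ^ p + (y - a) * (p * y ^ (p - 1))) / 2 - y ^ p) y := by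
    intro y hy
    have hy0 : 0 < y := lt_of_lt_of_le ha hy.1
    have h1 : HasDerivAt (fun z : ℝ => z ^ p) (p * y ^ (p - 1)) y :=
      Real.hasDerivAt_rpow_const (Or.inl hy0.ne')
    have h2 : HasDerivAt (fun z : ℝ => z ^ (p + 1)) ((p + 1) * y ^ p) y := by
      have := Real.hasDerivAt_rpow_const (p := p + 1) (x := y) (Or.inl hy0.ne')
      simpa using this
    have hlin : HasDerivAt (fun z : ℝ => z - a) 1 y := (hasDerivAt_id y).sub_const a
    have hmul : HasDerivAt (fun z : ℝ => (z - a) * (a ^ p + z ^ p))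
        (1 * (a ^ p + y ^ p) + (y - a) * (p * y ^ (p - 1))) y :=
      hlin.mul ((h1.const_add (a ^ p)))
    have hfull := (hmul.div_const 2).sub ((h2.sub_const (a ^ (p + 1))).div_const (p + 1))
    convert hfull using 1
    · rfl
    · rfl
    · rfl
    · field_simp
  have hmono : MonotoneOn F (Set.Icc a b) := by
    apply monotoneOn_of_deriv_nonneg (convex_Icc a b)
    · intro y hy
      exact (hd y hy).differentiableAt.continuousAt.continuousWithinAt
    · intro y hy
      rw [interior_Icc] at hy
      exact ((hd y (Set.mem_Icc_of_Ioo hy)).differentiableAt).differentiableWithinAt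
    · intro y hy
      rw [interior_Icc] at hy
      rw [(hd y (Set.mem_Icc_of_Ioo hy)).deriv]
      have hy0 : 0 < y := lt_trans ha hy.1
      have hay : 0 < a / y := div_pos ha hy0
      have hb := bern_aux hay hple
      have e1 : (a / y) ^ p = a ^ p / y ^ p := Real.div_rpow ha.le hy0.le p
      have hyp : 0 < y ^ p := Real.rpow_pos_of_pos hy0 p
      have h4 : y ^ p * (1 + p * (a / y - 1)) ≤ y ^ p * (a ^ p / y ^ p) := by
        rw [← e1]; exact mul_le_mul_of_nonneg_left hb hyp.le
      have h5 : y ^ p * (a ^ p / y ^ p) = a ^ p := by field_simp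
      have h6 : y ^ (p - 1) = y ^ p / y := by
        rw [Real.rpow_sub hy0, Real.rpow_one]
      have h7 : y ^ p * (1 + p * (a / y - 1))
          = y ^ p + p * (a * (y ^ p / y) - y ^ p) := by
        field_simp
      rw [h5, h7] at h4
      rw [h6]
      have hyy : y * (y ^ p / y) = y ^ p := by field_simp
      have h9 : (y - a) * (p * (y ^ p / y)) = p * (y ^ p - a * (y ^ p / y)) := by
        linear_combination p * hyy
      rw [h9]
      linarith [h4]
  -- identify F with the goal expressions
  have ex : ∀ y : ℝ, a < y →
      (y - a) * ((a ^ p + y ^ p) / 2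
        - (y ^ (p + 1) - a ^ (p + 1)) / ((p + 1) * (y - a))) = F y := by
    intro y hy
    have hya : y - a ≠ 0 := by linarith
    rw [hF]
    field_simp
  rw [ex x hx.1, ex b hab]
  exact hmono ⟨hx.1.le, hx.2⟩ ⟨hab.le, le_refl b⟩ hx.2
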